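/- Let δ, A > 0 with A > 0, p > 1, and let V: [0,∞) → ℝ be a C² function with V(0) = 1, V'(0) = 0, V(t) ≥ 1 for all t ≥ 0, satisfying V'' - δ²V + A e^{-pδt}V^{p-1} = 0 on [0,∞). Define H(t) = ½V'(t)² - (δ²/2)V(t)² + (A/p)e^{-pδt}V(t)^p. If H(t) ≥ 0 for all t ≥ 0, then a contradiction follows; i.e., there is no such V with H ≥ 0 on [0,∞). -/

import Mathlib

lemma my_anti {f g : ℝ → ℝ} {a : ℝ}
    (hf : ∀ t ∈ Set.Ici a, HasDerivAt f (g t) t)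
    (hg : ∀ t ∈ Set.Ici a, g t ≤ 0) : AntitoneOn f (Set.Ici a) := by
  apply antitoneOn_of_deriv_nonpos (convex_Ici a)
  · exact fun t ht => (hf t ht).continuousAt.continuousWithinAt
  · intro t ht
    rw [interior_Ici] at ht
    exact (hf t (Set.mem_Ici.mpr (le_of_lt ht))).differentiableAt.differentiableWithinAt
  · intro t ht
    rw [interior_Ici] at ht
    rw [(hf t (Set.mem_Ici.mpr (le_of_lt ht))).deriv]
    exact hg t (Set.mem_Ici.mpr (le_of_lt ht))

lemma my_mono {f g : ℝ → ℝ} {a : ℝ}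
    (hf : ∀ t ∈ Set.Ici a, HasDerivAt f (g t) t)
    (hg : ∀ t ∈ Set.Ici a, 0 ≤ g t) : MonotoneOn f (Set.Ici a) := by
  apply monotoneOn_of_deriv_nonneg (convex_Ici a)
  · exact fun t ht => (hf t ht).continuousAt.continuousWithinAt
  · intro t ht
    rw [interior_Ici] at ht
    exact (hf t (Set.mem_Ici.mpr (le_of_lt ht))).differentiableAt.differentiableWithinAt
  · intro t ht
    rw [interior_Ici] at ht
    rw [(hf t (Set.mem_Ici.mpr (le_of_lt ht))).deriv]
    exact hg t (Set.mem_Ici.mpr (le_of_lt ht))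

lemma exp_sq_lower (x : ℝ) (hx : 0 ≤ x) : (x/2 + 1)^2 ≤ Real.exp x := by
  have e2 : Real.exp x = Real.exp (x/2) * Real.exp (x/2) := by
    rw [← Real.exp_add]; ring_nf
  have h3 := Real.add_one_le_exp (x/2)
  have h4 := Real.exp_pos (x/2)
  nlinarith

set_option maxHeartbeats 1000000 in
theorem stmt_11 (δ A p : ℝ) (hδ : 0 < δ) (hA : 0 < A) (hp : 1 < p) (V : ℝ → ℝ)
    (hV : ContDiffOn ℝ 2 V (Set.Ici 0))
    (hV0 : V 0 = 1) (hV'0 : deriv V 0 = 0) (hV1 : ∀ t ≥ (0:ℝ), 1 ≤ V t)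
    (heq : ∀ t ≥ (0:ℝ), deriv (deriv V) t - δ^2 * V t
      + A * Real.exp (-p * δ * t) * V t ^ (p - 1) = 0)
    (hH : ∀ t ≥ (0:ℝ),
      0 ≤ (1/2) * (deriv V t)^2 - (δ^2/2) * (V t)^2
        + (A/p) * Real.exp (-p * δ * t) * V t ^ p) :
    False := by
  have hVo : ContDiffOn ℝ 2 V (Set.Ioi 0) := hV.mono Set.Ioi_subset_Ici_self
  have hWc : ContDiffOn ℝ 1 (deriv V) (Set.Ioi 0) :=
    hVo.deriv_of_isOpen (m := 1) isOpen_Ioi (by norm_num)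
  have hdV : ∀ t > (0:ℝ), HasDerivAt V (deriv V t) t := fun t ht =>
    ((hVo.contDiffAt (isOpen_Ioi.mem_nhds ht)).differentiableAt (by norm_num)).hasDerivAt
  have hdW : ∀ t > (0:ℝ), HasDerivAt (deriv V) (deriv (deriv V) t) t := fun t ht =>
    ((hWc.contDiffAt (isOpen_Ioi.mem_nhds ht)).differentiableAt (by norm_num)).hasDerivAt
  have hVpos : ∀ t ≥ (0:ℝ), 0 < V t := fun t ht => lt_of_lt_of_le one_pos (hV1 t ht)
  set u : ℝ → ℝ := fun s => Real.exp (-δ*s) * (deriv V s + δ * V s) with hu_def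
  set g : ℝ → ℝ := fun s => Real.exp (δ*s) * V s with hg_def
  have hgval : ∀ s, g s = Real.exp (δ*s) * V s := fun s => rfl
  have huval : ∀ s, u s = Real.exp (-δ*s) * (deriv V s + δ * V s) := fun s => rfl
  -- derivative of u
  have hu' : ∀ t > (0:ℝ), HasDerivAt u
      (-(A * Real.exp (-(1+p)*δ*t) * V t ^ (p-1))) t := by
    intro t ht
    rw [hu_def]
    have h1 : HasDerivAt (fun s : ℝ => Real.exp (-δ*s)) (Real.exp (-δ*t) * (-δ)) t :=
      by simpa using (((hasDerivAt_id t).const_mul (-δ)).exp)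
    have h2 : HasDerivAt (fun s => deriv V s + δ * V s)
        (deriv (deriv V) t + δ * deriv V t) t := (hdW t ht).add ((hdV t ht).const_mul δ)
    have h3 := h1.mul h2
    have heqt : deriv (deriv V) t = δ^2 * V t - A * Real.exp (-p*δ*t) * V t^(p-1) := by
      have := heq t ht.le; linarith
    refine h3.congr_deriv ?_
    rw [heqt, show (-(1+p)*δ*t) = (-δ*t) + (-p*δ*t) by ring, Real.exp_add]
    ring
  -- derivative of g
  have hg' : ∀ t > (0:ℝ), HasDerivAt g (Real.exp (2*δ*t) * u t) t := by
    intro t ht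
    rw [hg_def, hu_def]
    have h1 : HasDerivAt (fun s : ℝ => Real.exp (δ*s)) (Real.exp (δ*t) * δ) t :=
      by simpa using (((hasDerivAt_id t).const_mul δ).exp)
    have h3 := h1.mul (hdV t ht)
    refine h3.congr_deriv (Eq.symm ?_)
    have hc : Real.exp (2*δ*t) * Real.exp (-δ*t) = Real.exp (δ*t) := by
      rw [← Real.exp_add]; ring_nf
    calc Real.exp (2*δ*t) * (Real.exp (-δ*t) * (deriv V t + δ * V t))
        = (Real.exp (2*δ*t) * Real.exp (-δ*t)) * (deriv V t + δ * V t) := by ring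
      _ = Real.exp (δ*t) * (deriv V t + δ * V t) := by rw [hc]
      _ = Real.exp (δ*t) * δ * V t + Real.exp (δ*t) * deriv V t := by ring
  -- derivative of H
  have hH' : ∀ t > (0:ℝ), HasDerivAt (fun s => (1/2) * (deriv V s)^2 - (δ^2/2) * (V s)^2
      + (A/p) * Real.exp (-p * δ * s) * V s ^ p)
      (-(A * δ * Real.exp (-p*δ*t) * V t ^ p)) t := by
    intro t ht
    have hVt : (0:ℝ) < V t := hVpos t ht.le
    have h1 : HasDerivAt (fun s => (1/2) * (deriv V s)^2)
        ((1/2) * (2 * deriv V t * deriv (deriv V) t)) t := by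
      have h := ((hdW t ht).pow 2).const_mul (1/2 : ℝ)
      refine h.congr_deriv ?_
      push_cast; ring
    have h2 : HasDerivAt (fun s => (δ^2/2) * (V s)^2)
        ((δ^2/2) * (2 * V t * deriv V t)) t := by
      have h := ((hdV t ht).pow 2).const_mul (δ^2/2)
      refine h.congr_deriv ?_
      push_cast; ring
    have h3 : HasDerivAt (fun s : ℝ => Real.exp (-p*δ*s)) (Real.exp (-p*δ*t) * (-p*δ)) t :=
      by simpa using (((hasDerivAt_id t).const_mul (-p*δ)).exp)
    have h4 : HasDerivAt (fun s => V s ^ p) (deriv V t * p * V t ^ (p-1)) t :=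
      (hdV t ht).rpow_const (Or.inr hp.le)
    have h5 : HasDerivAt (fun s => (A/p) * (Real.exp (-p*δ*s) * V s ^ p))
        ((A/p) * ((Real.exp (-p*δ*t) * (-p*δ)) * V t ^ p
          + Real.exp (-p*δ*t) * (deriv V t * p * V t ^ (p-1)))) t :=
      (h3.mul h4).const_mul (A/p)
    have h6 := (h1.sub h2).add h5
    have heqt : deriv (deriv V) t = δ^2 * V t - A * Real.exp (-p*δ*t) * V t^(p-1) := by
      have := heq t ht.le; linarith
    have hrp : V t ^ (p-1) * V t = V t ^ p := by
      rw [← Real.rpow_add_one hVt.ne' (p-1)]; ring_nf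
    have hp0 : p ≠ 0 := by positivity
    refine (h6.congr_deriv ?_).congr_of_eventuallyEq (Filter.Eventually.of_forall fun s => ?_)
    · rw [heqt]
      field_simp
      nlinarith [hrp, sq_nonneg (V t)]
    · simp only [Pi.add_apply, Pi.sub_apply]; ring
  -- step: u ≥ 0 on (0,∞)
  have hu0 : ∀ t > (0:ℝ), 0 ≤ u t := by
    by_contra hcon
    push_neg at hcon
    obtain ⟨t₁, ht₁, hut₁⟩ := hcon
    have hanti : AntitoneOn u (Set.Ici t₁) := by
      apply my_anti (g := fun t => -(A * Real.exp (-(1+p)*δ*t) * V t ^ (p-1)))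
        (fun t ht => hu' t (lt_of_lt_of_le ht₁ ht))
      intro t ht
      have h0 : (0:ℝ) < t := lt_of_lt_of_le ht₁ ht
      have h1 : (0:ℝ) ≤ V t ^ (p-1) := Real.rpow_nonneg (hVpos t h0.le).le _
      have h2 := Real.exp_pos (-(1+p)*δ*t)
      have h3 := mul_nonneg (mul_nonneg hA.le h2.le) h1
      linarith
    set b : ℝ := (-u t₁)/(2*δ) with hb_def
    have hb : 0 < b := by
      apply div_pos (by linarith) (by linarith)
    have hb2 : b * (2*δ) = -u t₁ := by
      rw [hb_def]
      field_simp
    -- h := g + b exp(2δs) is antitone on Ici t₁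
    have hh : ∀ t ∈ Set.Ici t₁, HasDerivAt (fun s => g s + b * Real.exp (2*δ*s))
        (Real.exp (2*δ*t) * (u t - u t₁)) t := by
      intro t ht
      have h0 : (0:ℝ) < t := lt_of_lt_of_le ht₁ ht
      have hx : HasDerivAt (fun s : ℝ => Real.exp (2*δ*s)) (Real.exp (2*δ*t) * (2*δ)) t := by
        simpa using (((hasDerivAt_id t).const_mul (2*δ)).exp)
      have h2 := hx.const_mul b
      have h3 := (hg' t h0).add h2
      refine h3.congr_deriv ?_
      linear_combination (Real.exp (2*δ*t)) * hb2
    have hanti2 : AntitoneOn (fun s => g s + b * Real.exp (2*δ*s)) (Set.Ici t₁) := by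
      apply my_anti hh
      intro t ht
      have h4 : u t ≤ u t₁ := hanti Set.self_mem_Ici ht ht
      have h5 := Real.exp_pos (2*δ*t)
      nlinarith
    set D : ℝ := g t₁ + b * Real.exp (2*δ*t₁) with hD_def
    have hDpos : 0 < D := by
      rw [hD_def]
      have h6 : 0 < g t₁ := by
        rw [hgval]
        exact mul_pos (Real.exp_pos _) (hVpos t₁ ht₁.le)
      have h7 := Real.exp_pos (2*δ*t₁)
      nlinarith
    set T : ℝ := max t₁ ((D+1)/(b*(2*δ))) with hT_def
    have hTt₁ : t₁ ≤ T := le_max_left _ _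
    have hle : g T + b * Real.exp (2*δ*T) ≤ D :=
      hanti2 Set.self_mem_Ici (Set.mem_Ici.mpr hTt₁) hTt₁
    have hgT : Real.exp (δ*T) ≤ g T := by
      rw [hgval]
      have h7 : 1 ≤ V T := hV1 T (by linarith)
      nlinarith [Real.exp_pos (δ*T)]
    have hbig : D + 1 ≤ b * (2*δ) * T := by
      have h8 : (D+1)/(b*(2*δ)) ≤ T := le_max_right _ _
      have h9 : 0 < b*(2*δ) := by positivity
      calc D + 1 = ((D+1)/(b*(2*δ))) * (b*(2*δ)) := by field_simp
        _ ≤ T * (b*(2*δ)) := by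
            apply mul_le_mul_of_nonneg_right h8 h9.le
        _ = b * (2*δ) * T := by ring
    have hexp : 2*δ*T + 1 ≤ Real.exp (2*δ*T) := Real.add_one_le_exp _
    have h10 := Real.exp_pos (δ*T)
    nlinarith [mul_le_mul_of_nonneg_left hexp hb.le]
  -- antitone on Ici 1
  have hu_anti : AntitoneOn u (Set.Ici 1) := by
    apply my_anti (g := fun t => -(A * Real.exp (-(1+p)*δ*t) * V t ^ (p-1)))
      (fun t ht => hu' t (lt_of_lt_of_le one_pos ht))
    intro t ht
    have h0 : (0:ℝ) < t := lt_of_lt_of_le one_pos ht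
    have h1 : (0:ℝ) ≤ V t ^ (p-1) := Real.rpow_nonneg (hVpos t h0.le).le _
    have h2 := Real.exp_pos (-(1+p)*δ*t)
    have h3 := mul_nonneg (mul_nonneg hA.le h2.le) h1
    linarith
  set M : ℝ := u 1 with hM_def
  have hM0 : 0 ≤ M := hu0 1 one_pos
  have hg1pos : 0 < g 1 := by
    rw [hgval]
    exact mul_pos (Real.exp_pos _) (hVpos 1 (by norm_num))
  set C : ℝ := g 1 + M/(2*δ) with hC_def
  have hCpos : 0 < C := by
    rw [hC_def]
    have : 0 ≤ M/(2*δ) := by positivity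
    linarith
  -- upper bound V t ≤ C exp(δ t) on Ici 1
  have hVC : ∀ t ≥ (1:ℝ), V t ≤ C * Real.exp (δ*t) := by
    have hh : ∀ t ∈ Set.Ici (1:ℝ), HasDerivAt (fun s => g s - (M/(2*δ)) * Real.exp (2*δ*s))
        (Real.exp (2*δ*t) * (u t - M)) t := by
      intro t ht
      have h0 : (0:ℝ) < t := lt_of_lt_of_le one_pos ht
      have hx : HasDerivAt (fun s : ℝ => Real.exp (2*δ*s)) (Real.exp (2*δ*t) * (2*δ)) t := by
        simpa using (((hasDerivAt_id t).const_mul (2*δ)).exp)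
      have h2 := hx.const_mul (M/(2*δ))
      have h3 := (hg' t h0).sub h2
      refine h3.congr_deriv ?_
      have h4 : (M/(2*δ)) * (2*δ) = M := by field_simp
      linear_combination (-(Real.exp (2*δ*t))) * h4
    have hanti2 : AntitoneOn (fun s => g s - (M/(2*δ)) * Real.exp (2*δ*s)) (Set.Ici 1) := by
      apply my_anti hh
      intro t ht
      have h4 : u t ≤ M := hu_anti Set.self_mem_Ici ht ht
      have h5 := Real.exp_pos (2*δ*t)
      nlinarith
    intro t ht
    have hle := hanti2 Set.self_mem_Ici (Set.mem_Ici.mpr ht) ht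
    -- g t ≤ g 1 - (M/2δ) e^{2δ} + (M/2δ) e^{2δt}
    have hexp1 : (1:ℝ) ≤ Real.exp (2*δ*t) := by
      rw [← Real.exp_zero]
      apply Real.exp_le_exp.mpr
      nlinarith
    have hMd : 0 ≤ M/(2*δ) := by positivity
    have hgt : g t ≤ C * Real.exp (2*δ*t) := by
      have h6 : 0 ≤ (M/(2*δ)) * Real.exp (2*δ*1) := by positivity
      have h7 : g 1 ≤ g 1 * Real.exp (2*δ*t) := by nlinarith
      have h8 : (M/(2*δ)) * Real.exp (2*δ*t) ≤ (M/(2*δ)) * Real.exp (2*δ*t) := le_refl _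
      rw [hC_def]
      nlinarith
    -- divide by exp(δ t)
    have h9 : Real.exp (δ*t) * V t ≤ C * (Real.exp (δ*t) * Real.exp (δ*t)) := by
      have : Real.exp (δ*t) * Real.exp (δ*t) = Real.exp (2*δ*t) := by
        rw [← Real.exp_add]; ring_nf
      rw [this]
      calc Real.exp (δ*t) * V t = g t := (hgval t).symm
        _ ≤ C * Real.exp (2*δ*t) := hgt
    have h10 := Real.exp_pos (δ*t)
    nlinarith
  clear_value u g M C
  -- name the energy function
  set HF : ℝ → ℝ := fun s => (1/2) * (deriv V s)^2 - (δ^2/2) * (V s)^2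
      + (A/p) * Real.exp (-p * δ * s) * V s ^ p with hHF_def
  have hHFval : ∀ s, HF s = (1/2) * (deriv V s)^2 - (δ^2/2) * (V s)^2
      + (A/p) * Real.exp (-p * δ * s) * V s ^ p := fun s => rfl
  clear_value HF
  by_cases hcase : ∃ c > 0, ∀ t ≥ (1:ℝ), c ≤ u t
  · -- CASE (i): u bounded below by c > 0, so V grows like e^{δt} and H → -∞
    obtain ⟨c, hc, hcu⟩ := hcase
    set b : ℝ := c/(2*δ) with hbdef
    have hb : 0 < b := by rw [hbdef]; positivity
    have hb2 : b * (2*δ) = c := by rw [hbdef]; field_simp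
    clear_value b
    set F : ℝ → ℝ := fun s => g s - b * Real.exp (2*δ*s) with hFdef
    have hFval : ∀ s, F s = g s - b * Real.exp (2*δ*s) := fun s => rfl
    have hh : ∀ t ∈ Set.Ici (1:ℝ), HasDerivAt F (Real.exp (2*δ*t) * (u t - c)) t := by
      intro t ht
      have h0 : (0:ℝ) < t := lt_of_lt_of_le one_pos ht
      have hx : HasDerivAt (fun s : ℝ => Real.exp (2*δ*s)) (Real.exp (2*δ*t)*(2*δ)) t := by
        simpa using (((hasDerivAt_id t).const_mul (2*δ)).exp)
      have h3 := (hg' t h0).sub (hx.const_mul b)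
      rw [hFdef]
      refine h3.congr_deriv ?_
      linear_combination (-(Real.exp (2*δ*t))) * hb2
    have hmono : MonotoneOn F (Set.Ici 1) := by
      apply my_mono hh
      intro t ht
      have h1 := hcu t ht
      have h2 := Real.exp_pos (2*δ*t)
      nlinarith
    set K1 : ℝ := g 1 - b * Real.exp (2*δ*1) with hK1def
    have hglow : ∀ t ≥ (1:ℝ), b * Real.exp (2*δ*t) + K1 ≤ g t := by
      intro t ht
      have h1 := hmono Set.self_mem_Ici (Set.mem_Ici.mpr ht) ht
      rw [hFval, hFval] at h1
      rw [hK1def]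
      linarith
    clear_value K1
    set T₁ : ℝ := max 1 ((2*(1+|K1|))/(b*(2*δ))) with hT₁def
    have hT₁1 : (1:ℝ) ≤ T₁ := le_max_left _ _
    have hT₁r : (2*(1+|K1|))/(b*(2*δ)) ≤ T₁ := le_max_right _ _
    clear_value T₁
    have hVlow : ∀ t ≥ T₁, (b/2) * Real.exp (δ*t) ≤ V t := by
      intro t ht
      have ht1 : (1:ℝ) ≤ t := le_trans hT₁1 ht
      have h1 := hglow t ht1
      have hbig : 2*(1+|K1|) ≤ b*(2*δ)*t := by
        have h8 : (2*(1+|K1|))/(b*(2*δ)) ≤ t := le_trans hT₁r ht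
        have h9 : (0:ℝ) < b*(2*δ) := by positivity
        calc 2*(1+|K1|) = ((2*(1+|K1|))/(b*(2*δ))) * (b*(2*δ)) := (div_mul_cancel₀ _ h9.ne').symm
          _ ≤ t * (b*(2*δ)) := mul_le_mul_of_nonneg_right h8 h9.le
          _ = b*(2*δ)*t := by ring
      have hexp : 2*δ*t + 1 ≤ Real.exp (2*δ*t) := Real.add_one_le_exp _
      have hK : 1 + |K1| ≤ (b/2) * Real.exp (2*δ*t) := by
        nlinarith [mul_le_mul_of_nonneg_left hexp (by positivity : (0:ℝ) ≤ b/2)]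
      have h2 : (b/2) * Real.exp (2*δ*t) ≤ g t := by
        nlinarith [neg_abs_le K1, abs_nonneg K1]
      rw [hgval] at h2
      have hsplit : Real.exp (2*δ*t) = Real.exp (δ*t) * Real.exp (δ*t) := by
        rw [← Real.exp_add]; ring_nf
      rw [hsplit] at h2
      have h10 := Real.exp_pos (δ*t)
      have h2' : Real.exp (δ*t) * ((b/2) * Real.exp (δ*t)) ≤ Real.exp (δ*t) * V t := by
        ring_nf at h2 ⊢
        linarith
      exact le_of_mul_le_mul_left h2' h10
    set c4 : ℝ := (b/2)^p with hc4def
    have hc4 : 0 < c4 := by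
      rw [hc4def]
      exact Real.rpow_pos_of_pos (by positivity) p
    have hc4e : c4 = (b/2)^p := hc4def
    clear_value c4
    have hE : ∀ t ≥ T₁, c4 ≤ Real.exp (-p*δ*t) * V t ^ p := by
      intro t ht
      have h1 := hVlow t ht
      have h2 : ((b/2) * Real.exp (δ*t)) ^ p ≤ V t ^ p :=
        Real.rpow_le_rpow (by positivity) h1 (by linarith)
      have h3 : ((b/2) * Real.exp (δ*t)) ^ p = c4 * Real.exp (δ*t*p) := by
        rw [hc4e, Real.mul_rpow (by positivity) (Real.exp_pos _).le, ← Real.exp_mul]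
      have h4 : Real.exp (-p*δ*t) * Real.exp (δ*t*p) = 1 := by
        rw [← Real.exp_add, show -p*δ*t + δ*t*p = 0 by ring, Real.exp_zero]
      calc c4 = c4 * (Real.exp (-p*δ*t) * Real.exp (δ*t*p)) := by rw [h4]; ring
        _ = Real.exp (-p*δ*t) * (c4 * Real.exp (δ*t*p)) := by ring
        _ = Real.exp (-p*δ*t) * (((b/2) * Real.exp (δ*t)) ^ p) := by rw [h3]
        _ ≤ Real.exp (-p*δ*t) * V t ^ p := by
            exact mul_le_mul_of_nonneg_left h2 (Real.exp_pos _).le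
    set k : ℝ := A*δ*c4 with hkdef
    have hk : 0 < k := by rw [hkdef]; positivity
    have hke : k = A*δ*c4 := hkdef
    clear_value k
    have hT₁0 : (0:ℝ) < T₁ := lt_of_lt_of_le one_pos hT₁1
    have hh2 : ∀ t ∈ Set.Ici T₁, HasDerivAt (fun s => HF s + k*s)
        (-(A * δ * Real.exp (-p*δ*t) * V t ^ p) + k) t := by
      intro t ht
      have h0 : (0:ℝ) < t := lt_of_lt_of_le hT₁0 ht
      have hx : HasDerivAt (fun s : ℝ => k*s) k t := by
        simpa using (hasDerivAt_id t).const_mul k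
      exact ((hH' t h0).add hx)
    have hanti3 : AntitoneOn (fun s => HF s + k*s) (Set.Ici T₁) := by
      apply my_anti hh2
      intro t ht
      have h1 := hE t ht
      have h2 : A*δ*c4 ≤ A*δ*(Real.exp (-p*δ*t) * V t ^ p) :=
        mul_le_mul_of_nonneg_left h1 (by positivity)
      rw [hke]
      nlinarith
    set T₂ : ℝ := max T₁ ((HF T₁ + k*T₁ + 1)/k) with hT₂def
    have hT₂ : T₁ ≤ T₂ := le_max_left _ _
    have hT₂r : (HF T₁ + k*T₁ + 1)/k ≤ T₂ := le_max_right _ _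
    clear_value T₂
    have h5 : HF T₂ + k*T₂ ≤ HF T₁ + k*T₁ :=
      hanti3 Set.self_mem_Ici (Set.mem_Ici.mpr hT₂) hT₂
    have hbig2 : HF T₁ + k*T₁ + 1 ≤ k * T₂ := by
      have h8 : (HF T₁ + k*T₁ + 1)/k ≤ T₂ := hT₂r
      calc HF T₁ + k*T₁ + 1 = ((HF T₁ + k*T₁ + 1)/k) * k := by field_simp
        _ ≤ T₂ * k := mul_le_mul_of_nonneg_right h8 hk.le
        _ = k * T₂ := by ring
    have h6 := hH T₂ (by linarith)
    rw [← hHFval T₂] at h6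
    linarith
  · -- CASE (ii): inf u = 0, then u ≤ K e^{-2δt}, so V grows at most linearly in e^{δt}V form
    push_neg at hcase
    have hCp1 : (0:ℝ) < C^(p-1) := Real.rpow_pos_of_pos hCpos _
    set K : ℝ := A * C^(p-1) / (2*δ) with hKdef
    have hK0 : 0 < K := by rw [hKdef]; positivity
    have hK2 : K * (2*δ) = A * C^(p-1) := by rw [hKdef]; field_simp
    clear_value K
    -- monotone: u s - K e^{-2δ s}
    set F : ℝ → ℝ := fun s => u s - K * Real.exp (-(2*δ)*s) with hFdef
    have hFval : ∀ s, F s = u s - K * Real.exp (-(2*δ)*s) := fun s => rfl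
    have hh : ∀ t ∈ Set.Ici (1:ℝ), HasDerivAt F
        (-(A * Real.exp (-(1+p)*δ*t) * V t ^ (p-1)) + K * (2*δ) * Real.exp (-(2*δ)*t)) t := by
      intro t ht
      have h0 : (0:ℝ) < t := lt_of_lt_of_le one_pos ht
      have hx : HasDerivAt (fun s : ℝ => Real.exp (-(2*δ)*s)) (Real.exp (-(2*δ)*t)*(-(2*δ))) t := by
        simpa using (((hasDerivAt_id t).const_mul (-(2*δ))).exp)
      have h3 := (hu' t h0).sub (hx.const_mul K)
      rw [hFdef]
      refine h3.congr_deriv ?_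
      ring
    have hmono : MonotoneOn F (Set.Ici 1) := by
      apply my_mono hh
      intro t ht
      have h0 : (0:ℝ) < t := lt_of_lt_of_le one_pos ht
      -- V^{p-1} ≤ C^{p-1} e^{δt(p-1)}
      have h1 : V t ^ (p-1) ≤ (C * Real.exp (δ*t)) ^ (p-1) :=
        Real.rpow_le_rpow (hVpos t h0.le).le (hVC t ht) (by linarith)
      have h2 : (C * Real.exp (δ*t)) ^ (p-1) = C^(p-1) * Real.exp (δ*t*(p-1)) := by
        rw [Real.mul_rpow hCpos.le (Real.exp_pos _).le, ← Real.exp_mul]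
      rw [h2] at h1
      -- A e^{-(1+p)δt} V^{p-1} ≤ A C^{p-1} e^{-2δt}
      have h3 : Real.exp (-(1+p)*δ*t) * Real.exp (δ*t*(p-1)) = Real.exp (-(2*δ)*t) := by
        rw [← Real.exp_add]
        congr 1
        ring
      have h4 : A * Real.exp (-(1+p)*δ*t) * V t ^ (p-1)
          ≤ A * Real.exp (-(1+p)*δ*t) * (C^(p-1) * Real.exp (δ*t*(p-1))) := by
        apply mul_le_mul_of_nonneg_left h1 (by positivity)
      have h5 : A * Real.exp (-(1+p)*δ*t) * (C^(p-1) * Real.exp (δ*t*(p-1)))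
          = A * C^(p-1) * Real.exp (-(2*δ)*t) := by
        rw [← h3]; ring
      rw [h5] at h4
      rw [← hK2] at h4
      linarith
    -- claim : u t ≤ K e^{-2δ t} on Ici 1
    have hclaim : ∀ t ≥ (1:ℝ), u t ≤ K * Real.exp (-(2*δ)*t) := by
      intro t ht
      apply le_of_forall_pos_le_add
      intro ε hε
      obtain ⟨t₂, ht₂, hut₂⟩ := hcase ε hε
      have hmem : (1:ℝ) ≤ max t t₂ := le_trans ht (le_max_left t t₂)
      have h5 : u (max t t₂) ≤ u t₂ :=
        hu_anti (Set.mem_Ici.mpr ht₂) (Set.mem_Ici.mpr hmem) (le_max_right t t₂)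
      have h6 := hmono (Set.mem_Ici.mpr ht) (Set.mem_Ici.mpr hmem) (le_max_left t t₂)
      rw [hFval, hFval] at h6
      set t₃ : ℝ := max t t₂ with ht₃def
      have h7 : 0 ≤ K * Real.exp (-(2*δ)*t₃) := by positivity
      linarith
    -- antitone: g s - K s
    set F2 : ℝ → ℝ := fun s => g s - K * s with hF2def
    have hF2val : ∀ s, F2 s = g s - K * s := fun s => rfl
    have hh2 : ∀ t ∈ Set.Ici (1:ℝ), HasDerivAt F2 (Real.exp (2*δ*t) * u t - K) t := by
      intro t ht
      have h0 : (0:ℝ) < t := lt_of_lt_of_le one_pos ht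
      have hx : HasDerivAt (fun s : ℝ => K*s) K t := by
        simpa using (hasDerivAt_id t).const_mul K
      have h3 := (hg' t h0).sub hx
      rw [hF2def]
      exact h3
    have hanti2 : AntitoneOn F2 (Set.Ici 1) := by
      apply my_anti hh2
      intro t ht
      have h1 := hclaim t ht
      have h2 : Real.exp (2*δ*t) * u t ≤ Real.exp (2*δ*t) * (K * Real.exp (-(2*δ)*t)) :=
        mul_le_mul_of_nonneg_left h1 (Real.exp_pos _).le
      have h3 : Real.exp (2*δ*t) * (K * Real.exp (-(2*δ)*t)) = K := by
        rw [show Real.exp (2*δ*t) * (K * Real.exp (-(2*δ)*t))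
          = K * (Real.exp (2*δ*t) * Real.exp (-(2*δ)*t)) by ring, ← Real.exp_add,
          show 2*δ*t + -(2*δ)*t = 0 by ring, Real.exp_zero, mul_one]
      linarith [h3 ▸ h2]
    -- linear bound on g, contradiction with exponential growth
    set T : ℝ := max 1 ((4/δ^2)*(K + g 1) + 1) with hTdef
    have hT1 : (1:ℝ) ≤ T := le_max_left _ _
    have hTr : (4/δ^2)*(K + g 1) + 1 ≤ T := le_max_right _ _
    clear_value T
    have h5 := hanti2 Set.self_mem_Ici (Set.mem_Ici.mpr hT1) hT1
    rw [hF2val, hF2val] at h5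
    have hgT : Real.exp (δ*T) ≤ g T := by
      rw [hgval]
      have h7 : 1 ≤ V T := hV1 T (by linarith)
      nlinarith [Real.exp_pos (δ*T)]
    have hlin : Real.exp (δ*T) ≤ g 1 + K * T := by
      have hKT : K * 1 ≤ K * T := mul_le_mul_of_nonneg_left hT1 hK0.le
      linarith
    have hsq : (δ*T/2 + 1)^2 ≤ Real.exp (δ*T) := exp_sq_lower _ (by positivity)
    have hbig : (4/δ^2)*(K + g 1) + 1 ≤ T := hTr
    have hmul := mul_le_mul_of_nonneg_left hbig (show (0:ℝ) ≤ δ^2/4 by positivity)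
    have hsimp : (δ^2/4)*((4/δ^2)*(K + g 1) + 1) = (K + g 1) + δ^2/4 := by
      field_simp
    rw [hsimp] at hmul
    have hTmul : ((K + g 1) + δ^2/4) * T ≤ (δ^2/4)*T*T :=
      mul_le_mul_of_nonneg_right hmul (by linarith)
    nlinarith [hTmul, hsq, hlin, hK0.le, hg1pos.le, hT1]
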